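/- Let r_1,…,r_m > 0, k_1,…,k_m > 0, and set r_i' = (r_i/σ)^α for fixed α, σ > 0. If α̂' satisfies h'(α̂') = (1/m)Σ log r_i' where h'(a) = (Σ k_i (r_i')^a log r_i')/(Σ k_i (r_i')^a) − 1/a, then α̂ := α·α̂' satisfies h(α̂) = (1/m)Σ log r_i, where h(a) = (Σ k_i r_i^a log r_i)/(Σ k_i r_i^a) − 1/a. That is, the MLE of the Weibull shape parameter is equivariant: α̂ = α α̂'. -/

import Mathlib

theorem stmt_15 (m : ℕ) (r : Fin m → ℝ) (k : Fin m → ℝ) (α σ a' : ℝ)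
    (hr : ∀ i, 0 < r i) (hk : ∀ i, 0 < k i) (hα : 0 < α) (hσ : 0 < σ) (ha' : 0 < a')
    (hmle : (∑ i, k i * ((r i / σ) ^ α) ^ a' * Real.log ((r i / σ) ^ α)) /
        (∑ i, k i * ((r i / σ) ^ α) ^ a') - 1 / a'
      = (1 / m) * ∑ i, Real.log ((r i / σ) ^ α)) :
    (∑ i, k i * r i ^ (α * a') * Real.log (r i)) / (∑ i, k i * r i ^ (α * a'))
        - 1 / (α * a')
      = (1 / m) * ∑ i, Real.log (r i) := by
  rcases Nat.eq_zero_or_pos m with hm | hm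
  · subst hm
    simp only [Finset.univ_eq_empty, Finset.sum_empty, zero_div, Nat.cast_zero,
      div_zero, zero_mul, zero_sub, neg_eq_zero] at hmle
    exact absurd hmle (by positivity)
  · have hP : (0:ℝ) < σ ^ (α * a') := Real.rpow_pos_of_pos hσ _
    have h1 : ∀ i, ((r i / σ) ^ α) ^ a' = r i ^ (α * a') / σ ^ (α * a') := by
      intro i
      rw [← Real.rpow_mul (le_of_lt (div_pos (hr i) hσ)),
        Real.div_rpow (hr i).le hσ.le]
    have h2 : ∀ i, Real.log ((r i / σ) ^ α) = α * (Real.log (r i) - Real.log σ) := by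
      intro i
      rw [Real.log_rpow (div_pos (hr i) hσ), Real.log_div (hr i).ne' hσ.ne']
    simp only [h1, h2] at hmle
    set S := ∑ i, k i * r i ^ (α * a') with hS
    set T := ∑ i, k i * r i ^ (α * a') * Real.log (r i) with hT
    set L := ∑ i, Real.log (r i) with hL
    have hSpos : 0 < S := by
      apply Finset.sum_pos
      · intro i _
        exact mul_pos (hk i) (Real.rpow_pos_of_pos (hr i) _)
      · haveI : Nonempty (Fin m) := Fin.pos_iff_nonempty.mp hm
        exact Finset.univ_nonempty
    have e1 : (∑ i, k i * (r i ^ (α * a') / σ ^ (α * a')) *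
        (α * (Real.log (r i) - Real.log σ)))
        = (α / σ ^ (α * a')) * (T - Real.log σ * S) := by
      have hrhs : (α / σ ^ (α * a')) * (T - Real.log σ * S)
          = ∑ i, (α / σ ^ (α * a')) * (k i * r i ^ (α * a') * Real.log (r i)
              - Real.log σ * (k i * r i ^ (α * a'))) := by
        rw [hT, hS, Finset.mul_sum, ← Finset.sum_sub_distrib, ← Finset.mul_sum]
      rw [hrhs]
      apply Finset.sum_congr rfl
      intro i _
      field_simp
    have e2 : (∑ i, k i * (r i ^ (α * a') / σ ^ (α * a'))) = S / σ ^ (α * a') := by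
      rw [hS, Finset.sum_div]
      apply Finset.sum_congr rfl
      intro i _
      ring
    have e3 : (∑ i, α * (Real.log (r i) - Real.log σ))
        = α * (L - m * Real.log σ) := by
      rw [hL, ← Finset.mul_sum, Finset.sum_sub_distrib, Finset.sum_const,
        Finset.card_univ, Fintype.card_fin, nsmul_eq_mul]
    rw [e1, e2, e3] at hmle
    have hmne : (m : ℝ) ≠ 0 := Nat.cast_ne_zero.mpr hm.ne'
    have key : α * (T / S) - 1 / a' = α * ((1 / m) * L) := by
      have hd : (α / σ ^ (α * a')) * (T - Real.log σ * S) / (S / σ ^ (α * a'))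
          = α * (T / S) - α * Real.log σ := by
        field_simp
      rw [hd] at hmle
      have : (1 / (m:ℝ)) * (α * (L - m * Real.log σ))
          = α * ((1 / m) * L) - α * Real.log σ := by
        field_simp
      rw [this] at hmle
      linarith
    have hαne := hα.ne'
    have ha'ne := ha'.ne'
    have hSne := hSpos.ne'
    field_simp at key ⊢
    nlinarith [key, mul_pos hα ha', hSpos]
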